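/- Let A = {a_1,...,a_n} and B = {b_1,...,b_n} be finite multisets of real numbers and let r > 0. Suppose the multiset sum A + rA (all pairwise sums a_i + r·a_j counted with multiplicity) equals the multiset B - rB (all differences b_i - r·b_j), and suppose b_i - a_i = C for all i, a common constant. Then A is symmetric about the point C(1-r)/(2r); i.e., as multisets, A = { C(1-r)/r - a : a ∈ A }. -/

import Mathlib

private lemma finset_sum_eq {α β : Type*} [AddCommMonoid β] (s : Finset α) (f : α → β) :
    ∑ x ∈ s, f x = (s.val.map f).sum := rfl

private lemma count_eval_aux (M : Multiset ℝ) (y : ℝ) :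
    ((M.map (fun x => (AddMonoidAlgebra.single x (1:ℝ) : AddMonoidAlgebra ℝ ℝ))).sum).coeff y
      = (M.count y : ℝ) := by
  induction M using Multiset.induction with
  | empty => simp
  | cons x M ih =>
    simp only [Multiset.map_cons, Multiset.sum_cons, Multiset.count_cons]
    have : ((AddMonoidAlgebra.single x (1:ℝ) : AddMonoidAlgebra ℝ ℝ)
        + (M.map (fun x => (AddMonoidAlgebra.single x (1:ℝ) : AddMonoidAlgebra ℝ ℝ))).sum).coeff y
        = (AddMonoidAlgebra.single x (1:ℝ) : AddMonoidAlgebra ℝ ℝ).coeff y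
          + ((M.map (fun x => (AddMonoidAlgebra.single x (1:ℝ) : AddMonoidAlgebra ℝ ℝ))).sum).coeff y :=
      rfl
    rw [this, ih, AddMonoidAlgebra.coeff_single, Finsupp.single_apply]
    by_cases h : y = x <;> simp [h, eq_comm, add_comm]

private lemma multiset_eq_of_sum_single (M N : Multiset ℝ)
    (h : (M.map (fun x => (AddMonoidAlgebra.single x (1:ℝ) : AddMonoidAlgebra ℝ ℝ))).sum
       = (N.map (fun x => (AddMonoidAlgebra.single x (1:ℝ) : AddMonoidAlgebra ℝ ℝ))).sum) :
    M = N := by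
  ext y
  have h' : (M.map (fun x => (AddMonoidAlgebra.single x (1:ℝ) : AddMonoidAlgebra ℝ ℝ))).sum.coeff y
      = (N.map (fun x => (AddMonoidAlgebra.single x (1:ℝ) : AddMonoidAlgebra ℝ ℝ))).sum.coeff y := by
    rw [h]
  rw [count_eval_aux, count_eval_aux] at h'
  exact_mod_cast h'

theorem stmt_0 (n : ℕ) (a b : Fin n → ℝ) (r C : ℝ) (hr : 0 < r)
    (hC : ∀ i, b i - a i = C)
    (hmul : Multiset.map (fun p : Fin n × Fin n => a p.1 + r * a p.2) Finset.univ.val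
      = Multiset.map (fun p : Fin n × Fin n => b p.1 - r * b p.2) Finset.univ.val) :
    Multiset.map a Finset.univ.val
      = Multiset.map (fun i => C * (1 - r) / r - a i) Finset.univ.val := by
  rcases Nat.eq_zero_or_pos n with hn | hn
  · subst hn; simp
  have hr' : r ≠ 0 := ne_of_gt hr
  set K := C * (1 - r) with hK
  have hb : ∀ i, b i = a i + C := fun i => by linarith [hC i]
  have h2 : (∑ p : Fin n × Fin n, (AddMonoidAlgebra.single (a p.1 + r * a p.2) (1:ℝ) : AddMonoidAlgebra ℝ ℝ))
      = ∑ p : Fin n × Fin n, (AddMonoidAlgebra.single (b p.1 - r * b p.2) (1:ℝ) : AddMonoidAlgebra ℝ ℝ) := by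
    rw [finset_sum_eq, finset_sum_eq]
    have := congrArg
      (fun M : Multiset ℝ => (M.map (fun x => (AddMonoidAlgebra.single x (1:ℝ) : AddMonoidAlgebra ℝ ℝ))).sum) hmul
    simpa [Multiset.map_map, Function.comp] using this
  have factorL : (∑ p : Fin n × Fin n, (AddMonoidAlgebra.single (a p.1 + r * a p.2) (1:ℝ) : AddMonoidAlgebra ℝ ℝ))
      = (∑ i, (AddMonoidAlgebra.single (a i) (1:ℝ) : AddMonoidAlgebra ℝ ℝ))
        * (∑ j, (AddMonoidAlgebra.single (r * a j) (1:ℝ) : AddMonoidAlgebra ℝ ℝ)) := by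
    rw [Finset.sum_mul_sum, Fintype.sum_prod_type]
    refine Finset.sum_congr rfl fun i _ => Finset.sum_congr rfl fun j _ => ?_
    rw [AddMonoidAlgebra.single_mul_single, one_mul]
  have factorR : (∑ p : Fin n × Fin n, (AddMonoidAlgebra.single (b p.1 - r * b p.2) (1:ℝ) : AddMonoidAlgebra ℝ ℝ))
      = (∑ i, (AddMonoidAlgebra.single (a i) (1:ℝ) : AddMonoidAlgebra ℝ ℝ))
        * (∑ j, (AddMonoidAlgebra.single (K - r * a j) (1:ℝ) : AddMonoidAlgebra ℝ ℝ)) := by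
    rw [Finset.sum_mul_sum, Fintype.sum_prod_type]
    refine Finset.sum_congr rfl fun i _ => Finset.sum_congr rfl fun j _ => ?_
    rw [AddMonoidAlgebra.single_mul_single, one_mul]
    congr 1
    rw [hb i, hb j, hK]; ring
  have hA : (∑ i, (AddMonoidAlgebra.single (a i) (1:ℝ) : AddMonoidAlgebra ℝ ℝ)) ≠ 0 := by
    intro h
    have h0 : Multiset.map a Finset.univ.val = (0 : Multiset ℝ) := by
      apply multiset_eq_of_sum_single
      rw [Multiset.map_map, Multiset.map_zero, Multiset.sum_zero]
      simp only [Function.comp]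
      rw [finset_sum_eq] at h
      exact h
    have := congrArg Multiset.card h0
    simp at this
    omega
  have hcancel : (∑ j, (AddMonoidAlgebra.single (r * a j) (1:ℝ) : AddMonoidAlgebra ℝ ℝ))
      = ∑ j, (AddMonoidAlgebra.single (K - r * a j) (1:ℝ) : AddMonoidAlgebra ℝ ℝ) :=
    mul_left_cancel₀ hA (by rw [← factorL, ← factorR, h2])
  have key : Multiset.map (fun j : Fin n => r * a j) Finset.univ.val
      = Multiset.map (fun j : Fin n => K - r * a j) Finset.univ.val := by
    apply multiset_eq_of_sum_single
    rw [Multiset.map_map, Multiset.map_map]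
    simp only [Function.comp]
    rw [finset_sum_eq, finset_sum_eq] at hcancel
    exact hcancel
  calc Multiset.map a Finset.univ.val
      = Multiset.map ((fun x => x / r) ∘ (fun j : Fin n => r * a j)) Finset.univ.val := by
        refine Multiset.map_congr rfl fun j _ => ?_
        simp [Function.comp, hr', mul_div_cancel_left₀]
    _ = Multiset.map ((fun x => x / r) ∘ (fun j : Fin n => K - r * a j)) Finset.univ.val := by
        rw [← Multiset.map_map, ← Multiset.map_map, key]
    _ = Multiset.map (fun i => C * (1 - r) / r - a i) Finset.univ.val := by
        refine Multiset.map_congr rfl fun j _ => ?_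
        simp only [Function.comp, hK]
        field_simp
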